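/- Let ε > 0, κ₀ > 0, κ₁ > 0, C ≥ 0, β > 0, N ∈ ℕ, and let κ: ℝ → ℂ be measurable with |κ(ω)| ≤ κ₁(1+|ω|)^N for all ω and Im κ(ω) ≥ κ₀|ω|^β − C for all ω. Then there exist constants B, b > 0 such that for every j ∈ ℕ₀, (1/j!) ∫_ℝ |κ(ω)|^j e^{−2ε Im κ(ω)} dω ≤ B b^j j^{(N/β − 1) j}. -/

import Mathlib

open MeasureTheory


lemma aux1' {c ρ t : ℝ} (hc : 0 < c) (hρ : 0 ≤ ρ) (ht : 0 ≤ t) :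
    t ^ ρ * Real.exp (-(c * t)) ≤ (ρ / c) ^ ρ := by
  rcases eq_or_lt_of_le hρ with h0 | hρ
  · simp only [← h0, Real.rpow_zero, one_mul]
    exact Real.exp_le_one_iff.mpr (by nlinarith)
  rcases eq_or_lt_of_le ht with h0 | ht
  · rw [← h0, Real.zero_rpow hρ.ne', zero_mul]
    exact Real.rpow_nonneg (by positivity) _
  have hxpos : 0 < c * t / ρ := by positivity
  have hlog := Real.log_le_sub_one_of_pos hxpos
  have hlogeq : Real.log (c * t / ρ) = Real.log c + Real.log t - Real.log ρ := by
    rw [Real.log_div (by positivity) hρ.ne', Real.log_mul hc.ne' ht.ne']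
  have key : Real.log t * ρ ≤ Real.log (ρ / c) * ρ + c * t := by
    rw [Real.log_div hρ.ne' hc.ne']
    have h2 : Real.log (c * t / ρ) * ρ ≤ (c * t / ρ) * ρ := by
      nlinarith
    rw [hlogeq, div_mul_cancel₀ _ hρ.ne'] at h2
    nlinarith
  rw [Real.rpow_def_of_pos ht, Real.rpow_def_of_pos (by positivity), ← Real.exp_add,
    Real.exp_le_exp]
  linarith

lemma aux2' (j : ℕ) : (j : ℝ) ^ j ≤ Real.exp 1 ^ j * (j.factorial : ℝ) := by
  induction j with
  | zero => simp
  | succ j ih =>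
    have hstep : ((j : ℝ) + 1) ^ j ≤ Real.exp 1 * (j : ℝ) ^ j := by
      rcases Nat.eq_zero_or_pos j with h0 | h1
      · subst h0; simpa using Real.one_le_exp zero_le_one
      · have hj : (0 : ℝ) < j := by exact_mod_cast h1
        have h2 : (j : ℝ) + 1 = (j : ℝ) * (1 + 1 / j) := by field_simp
        have h3 : (1 + 1 / (j : ℝ)) ≤ Real.exp (1 / j) := by
          have := Real.add_one_le_exp (1 / (j : ℝ)); linarith
        calc ((j : ℝ) + 1) ^ j = (j : ℝ) ^ j * (1 + 1 / j) ^ j := by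
              rw [h2, mul_pow]
          _ ≤ (j : ℝ) ^ j * Real.exp (1 / j) ^ j := by
              gcongr
          _ = (j : ℝ) ^ j * Real.exp 1 := by
              rw [← Real.exp_nat_mul]
              congr 1
              field_simp
          _ = Real.exp 1 * (j : ℝ) ^ j := by ring
    have hcast : ((j + 1).factorial : ℝ) = ((j : ℝ) + 1) * (j.factorial : ℝ) := by
      rw [Nat.factorial_succ]; push_cast; ring
    push_cast
    calc ((j : ℝ) + 1) ^ (j + 1) = ((j : ℝ) + 1) ^ j * ((j : ℝ) + 1) := by ring
      _ ≤ (Real.exp 1 * (j : ℝ) ^ j) * ((j : ℝ) + 1) := by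
          apply mul_le_mul_of_nonneg_right hstep (by positivity)
      _ ≤ (Real.exp 1 * (Real.exp 1 ^ j * (j.factorial : ℝ))) * ((j : ℝ) + 1) := by
          have : (0:ℝ) ≤ (j:ℝ) + 1 := by positivity
          gcongr
      _ = Real.exp 1 ^ (j + 1) * ((j + 1).factorial : ℝ) := by
          rw [hcast]; ring


set_option maxHeartbeats 1600000 in
theorem frequency_integral_bound (ε κ₀ κ₁ C β : ℝ) (N : ℕ)
    (hε : 0 < ε) (hκ₀ : 0 < κ₀) (hκ₁ : 0 < κ₁) (hC : 0 ≤ C) (hβ : 0 < β)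
    (κ : ℝ → ℂ) (hmeas : Measurable κ)
    (hbound : ∀ ω : ℝ, ‖κ ω‖ ≤ κ₁ * (1 + |ω|) ^ N)
    (hatt : ∀ ω : ℝ, κ₀ * |ω| ^ β - C ≤ (κ ω).im) :
    ∃ B b : ℝ, 0 < B ∧ 0 < b ∧ ∀ j : ℕ,
      (1 / j.factorial : ℝ) *
          ∫ ω : ℝ, ‖κ ω‖ ^ j * Real.exp (-2 * ε * (κ ω).im) ≤
        B * b ^ j * (j : ℝ) ^ (((N : ℝ) / β - 1) * j) := by
  set c : ℝ := ε * κ₀ with hc_def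
  have hc : 0 < c := by positivity
  have hp : (0:ℝ) ≤ (N : ℝ) / β := by positivity
  set K : ℝ := ((N : ℝ) / (c * β)) ^ ((N : ℝ) / β) with hK_def
  have hK : 0 ≤ K := Real.rpow_nonneg (by positivity) _
  set g : ℝ → ℝ := fun ω => Real.exp (-(c * |ω| ^ β)) with hg_def
  have hg_meas : Measurable g := by fun_prop
  have hg_nonneg : ∀ ω, 0 ≤ g ω := fun ω => Real.exp_nonneg _
  -- integrability of g
  have hD₁ : ∀ ω : ℝ, ω ^ 2 * g ω ≤ ((2 / β) / c) ^ ((2:ℝ) / β) := by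
    intro ω
    have h1 : (ω:ℝ) ^ 2 = (|ω| ^ β) ^ ((2:ℝ) / β) := by
      rw [← Real.rpow_mul (abs_nonneg ω), mul_div_cancel₀ _ hβ.ne',
        show ((2:ℝ)) = ((2:ℕ):ℝ) by norm_cast, Real.rpow_natCast, sq_abs]
    rw [h1]
    exact aux1' hc (by positivity) (Real.rpow_nonneg (abs_nonneg ω) β)
  have hg_int : Integrable g := by
    apply Integrable.mono' (integrable_inv_one_add_sq.const_mul
      (1 + ((2 / β) / c) ^ ((2:ℝ) / β))) hg_meas.aestronglyMeasurable
    filter_upwards with ω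
    rw [Real.norm_of_nonneg (hg_nonneg ω)]
    have hg1 : g ω ≤ 1 := by
      apply Real.exp_le_one_iff.mpr
      simp only [neg_nonpos]
      positivity
    have h2 : g ω * (1 + ω ^ 2) ≤ 1 + ((2 / β) / c) ^ ((2:ℝ) / β) := by
      nlinarith [hD₁ ω, hg_nonneg ω]
    calc g ω = g ω * (1 + ω ^ 2) * (1 + ω ^ 2)⁻¹ := by field_simp
      _ ≤ (1 + ((2 / β) / c) ^ ((2:ℝ) / β)) * (1 + ω ^ 2)⁻¹ :=
        mul_le_mul_of_nonneg_right h2 (by positivity)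
  set C₀ : ℝ := ∫ ω, g ω with hC₀_def
  have hC₀ : 0 ≤ C₀ := integral_nonneg hg_nonneg
  -- the constants
  refine ⟨2 * Real.exp (2 * ε * C) * (C₀ + 1), 2 ^ N * κ₁ * Real.exp 1 * (1 + K),
    by positivity, by positivity, fun j => ?_⟩
  set S : ℝ := ((N : ℝ) / (c * β) * j) ^ ((N : ℝ) / β * j) with hS_def
  have hS_nonneg : 0 ≤ S := Real.rpow_nonneg (by positivity) _
  set f : ℝ → ℝ := fun ω => ‖κ ω‖ ^ j * Real.exp (-2 * ε * (κ ω).im) with hf_def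
  set D : ℝ := Real.exp (2 * ε * C) * (2 ^ N * κ₁) ^ j * (1 + S) with hD_def
  have hD_nonneg : 0 ≤ D := by positivity
  -- pointwise bound
  have hpt : ∀ ω, f ω ≤ D * g ω := by
    intro ω
    set t : ℝ := |ω| with ht_def
    have ht : 0 ≤ t := abs_nonneg ω
    have h1 : ‖κ ω‖ ^ j ≤ (κ₁ * (1 + t) ^ N) ^ j :=
      pow_le_pow_left₀ (norm_nonneg _) (hbound ω) j
    have h2 : Real.exp (-2 * ε * (κ ω).im) ≤
        Real.exp (2 * ε * C) * (g ω * g ω) := by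
      rw [hg_def]
      simp only
      rw [← Real.exp_add, ← Real.exp_add, ← ht_def]
      apply Real.exp_le_exp.mpr
      have h := hatt ω
      rw [← ht_def] at h
      rw [hc_def]
      nlinarith [mul_le_mul_of_nonneg_left h (by positivity : (0:ℝ) ≤ 2 * ε)]
    -- (1+t)^(N*j) ≤ 2^(N*j) * (1 + t^(N*j))
    have h4 : (1 + t) ^ (N * j) ≤ 2 ^ (N * j) * (1 + t ^ (N * j)) := by
      have hmax : 1 + t ≤ 2 * max 1 t := by
        rcases le_total t 1 with h | h
        · simp [max_eq_left h]; linarith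
        · simp [max_eq_right h]; linarith
      calc (1 + t) ^ (N * j) ≤ (2 * max 1 t) ^ (N * j) :=
            pow_le_pow_left₀ (by positivity) hmax _
        _ = 2 ^ (N * j) * (max 1 t) ^ (N * j) := mul_pow _ _ _
        _ ≤ 2 ^ (N * j) * (1 + t ^ (N * j)) := by
            apply mul_le_mul_of_nonneg_left _ (by positivity)
            rcases le_total t 1 with h | h
            · rw [max_eq_left h]
              simp only [one_pow]
              nlinarith [pow_nonneg ht (N * j)]
            · rw [max_eq_right h]
              nlinarith [pow_nonneg ht (N * j)]
    -- t^(N*j) * g ω ≤ S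
    have h5 : t ^ (N * j) * g ω ≤ S := by
      have hrw : t ^ (N * j) = (t ^ β) ^ ((N : ℝ) / β * j) := by
        rw [← Real.rpow_natCast t (N * j), ← Real.rpow_mul ht]
        congr 1
        push_cast
        field_simp
      rw [hrw, hg_def]
      have := aux1' hc (by positivity : (0:ℝ) ≤ (N : ℝ) / β * j)
        (Real.rpow_nonneg ht β)
      simp only at this ⊢
      rw [← ht_def]
      calc (t ^ β) ^ ((N : ℝ) / β * j) * Real.exp (-(c * t ^ β)) ≤
            ((N : ℝ) / β * j / c) ^ ((N : ℝ) / β * j) := this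
        _ = S := by rw [hS_def]; congr 1; ring
    have hgle1 : g ω ≤ 1 := by
      apply Real.exp_le_one_iff.mpr
      simp only [neg_nonpos]
      positivity
    calc f ω ≤ (κ₁ * (1 + t) ^ N) ^ j * (Real.exp (2 * ε * C) * (g ω * g ω)) := by
          apply mul_le_mul h1 h2 (Real.exp_nonneg _) (by positivity)
      _ = Real.exp (2 * ε * C) * κ₁ ^ j * ((1 + t) ^ (N * j) * (g ω * g ω)) := by
          rw [mul_pow, pow_mul]; ring
      _ ≤ Real.exp (2 * ε * C) * κ₁ ^ j * ((2 ^ (N * j) * (1 + t ^ (N * j))) * (g ω * g ω)) := by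
          apply mul_le_mul_of_nonneg_left _ (by positivity)
          apply mul_le_mul_of_nonneg_right h4 (by positivity)
      _ = Real.exp (2 * ε * C) * κ₁ ^ j * 2 ^ (N * j) *
            ((g ω + t ^ (N * j) * g ω) * g ω) := by ring
      _ ≤ Real.exp (2 * ε * C) * κ₁ ^ j * 2 ^ (N * j) * ((1 + S) * g ω) := by
          apply mul_le_mul_of_nonneg_left _ (by positivity)
          apply mul_le_mul_of_nonneg_right _ (hg_nonneg ω)
          exact add_le_add hgle1 h5
      _ = D * g ω := by rw [hD_def, pow_mul]; ring
  -- integrability of f and integral bound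
  have hf_meas : AEStronglyMeasurable f volume := by
    apply Measurable.aestronglyMeasurable
    exact ((continuous_norm.measurable.comp hmeas).pow_const j).mul
      (Real.measurable_exp.comp (measurable_const.mul (Complex.measurable_im.comp hmeas)))
  have hf_nonneg : ∀ ω, 0 ≤ f ω := fun ω => by positivity
  have hDg_int : Integrable (fun ω => D * g ω) := hg_int.const_mul D
  have hf_int : Integrable f := by
    apply hDg_int.mono' hf_meas
    filter_upwards with ω
    rw [Real.norm_of_nonneg (hf_nonneg ω)]
    exact hpt ω
  have hI : ∫ ω, f ω ≤ D * C₀ := by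
    calc ∫ ω, f ω ≤ ∫ ω, D * g ω := integral_mono hf_int hDg_int hpt
      _ = D * C₀ := by rw [integral_const_mul]
  -- arithmetic
  have hS_eq : S = K ^ j * ((j:ℝ) ^ ((N : ℝ) / β * j)) := by
    rw [hS_def, Real.mul_rpow (by positivity) (Nat.cast_nonneg j)]
    congr 1
    rw [hK_def, ← Real.rpow_natCast (((N : ℝ) / (c * β)) ^ ((N : ℝ) / β)) j,
      ← Real.rpow_mul (by positivity)]
  have hfac_pos : (0:ℝ) < (j.factorial : ℝ) := by exact_mod_cast j.factorial_pos
  have hjp : (j:ℝ) ^ ((N : ℝ) / β * j) ≤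
      (j:ℝ) ^ (((N : ℝ) / β - 1) * j) * (Real.exp 1 ^ j * (j.factorial : ℝ)) := by
    rcases Nat.eq_zero_or_pos j with h0 | h1
    · subst h0; simp
    · have hj1 : (1:ℝ) ≤ (j:ℝ) := by exact_mod_cast h1
      have hjpos : (0:ℝ) < (j:ℝ) := by linarith
      have hsplit : (N : ℝ) / β * j = ((N : ℝ) / β - 1) * j + j := by ring
      rw [hsplit, Real.rpow_add hjpos, Real.rpow_natCast]
      exact mul_le_mul_of_nonneg_left (aux2' j) (Real.rpow_nonneg hjpos.le _)
  have h1le : 1 ≤ (j:ℝ) ^ (((N : ℝ) / β - 1) * j) * (Real.exp 1 ^ j * (j.factorial : ℝ)) := by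
    rcases Nat.eq_zero_or_pos j with h0 | h1
    · subst h0; simp
    · have hj1 : (1:ℝ) ≤ (j:ℝ) := by exact_mod_cast h1
      have hjpos : (0:ℝ) < (j:ℝ) := by linarith
      have ha : (j:ℝ) ^ (-(j:ℝ)) ≤ (j:ℝ) ^ (((N : ℝ) / β - 1) * j) := by
        apply Real.rpow_le_rpow_of_exponent_le hj1
        nlinarith [Nat.cast_nonneg (α := ℝ) j]
      have hb : 1 ≤ (j:ℝ) ^ (-(j:ℝ)) * (Real.exp 1 ^ j * (j.factorial : ℝ)) := by
        rw [Real.rpow_neg hjpos.le, Real.rpow_natCast]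
        have hjj : (0:ℝ) < (j:ℝ) ^ j := by positivity
        rw [inv_mul_eq_div, le_div_iff₀ hjj, one_mul]
        exact aux2' j
      calc (1:ℝ) ≤ (j:ℝ) ^ (-(j:ℝ)) * (Real.exp 1 ^ j * (j.factorial : ℝ)) := hb
        _ ≤ _ := mul_le_mul_of_nonneg_right ha (by positivity)
  have hfinal : 1 + S ≤ 2 * (1 + K) ^ j *
      ((j:ℝ) ^ (((N : ℝ) / β - 1) * j) * (Real.exp 1 ^ j * (j.factorial : ℝ))) := by
    have hKj : K ^ j ≤ (1 + K) ^ j := pow_le_pow_left₀ hK (by linarith) j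
    have h1K : (1:ℝ) ≤ (1 + K) ^ j := by
      have := pow_le_pow_left₀ (zero_le_one) (show (1:ℝ) ≤ 1 + K by linarith) j
      simpa using this
    have hR : (0:ℝ) ≤ (j:ℝ) ^ (((N : ℝ) / β - 1) * j) * (Real.exp 1 ^ j * (j.factorial : ℝ)) := by
      positivity
    have hSle : S ≤ K ^ j * ((j:ℝ) ^ (((N : ℝ) / β - 1) * j) * (Real.exp 1 ^ j * (j.factorial : ℝ))) := by
      rw [hS_eq]
      exact mul_le_mul_of_nonneg_left hjp (pow_nonneg hK j)
    have e1 : K ^ j * ((j:ℝ) ^ (((N : ℝ) / β - 1) * j) * (Real.exp 1 ^ j * (j.factorial : ℝ))) ≤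
        (1 + K) ^ j * ((j:ℝ) ^ (((N : ℝ) / β - 1) * j) * (Real.exp 1 ^ j * (j.factorial : ℝ))) :=
      mul_le_mul_of_nonneg_right hKj hR
    have e2 : (j:ℝ) ^ (((N : ℝ) / β - 1) * j) * (Real.exp 1 ^ j * (j.factorial : ℝ)) ≤
        (1 + K) ^ j * ((j:ℝ) ^ (((N : ℝ) / β - 1) * j) * (Real.exp 1 ^ j * (j.factorial : ℝ))) :=
      le_mul_of_one_le_left hR h1K
    linarith [h1le, hSle, e1, e2]
  -- conclude
  have hchain : ∫ ω, f ω ≤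
      (2 * Real.exp (2 * ε * C) * (C₀ + 1)) * (2 ^ N * κ₁ * Real.exp 1 * (1 + K)) ^ j *
        (j : ℝ) ^ (((N : ℝ) / β - 1) * j) * (j.factorial : ℝ) := by
    calc ∫ ω, f ω ≤ D * C₀ := hI
      _ ≤ D * (C₀ + 1) := by nlinarith
      _ = (Real.exp (2 * ε * C) * (2 ^ N * κ₁) ^ j * (C₀ + 1)) * (1 + S) := by
          rw [hD_def]; ring
      _ ≤ (Real.exp (2 * ε * C) * (2 ^ N * κ₁) ^ j * (C₀ + 1)) *
            (2 * (1 + K) ^ j * ((j:ℝ) ^ (((N : ℝ) / β - 1) * j) *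
              (Real.exp 1 ^ j * (j.factorial : ℝ)))) := by
          apply mul_le_mul_of_nonneg_left hfinal (by positivity)
      _ = (2 * Real.exp (2 * ε * C) * (C₀ + 1)) * (2 ^ N * κ₁ * Real.exp 1 * (1 + K)) ^ j *
            (j : ℝ) ^ (((N : ℝ) / β - 1) * j) * (j.factorial : ℝ) := by
          rw [mul_pow, mul_pow, mul_pow]; ring
  rw [div_mul_eq_mul_div, one_mul, div_le_iff₀ hfac_pos]
  exact hchain
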